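/- Let n ≥ 1 be a natural number, let a, b be integers, and suppose g is an invertible 3×3 integer matrix (g ∈ GL(3,ℤ)) such that g fixes the first standard basis vector e₁ and the third standard basis vector e₃ of ℤ³, and g maps the vector (−(n−1), n, −1) to (a, b, −1). Then a ≡ 1 (mod n), and b = n or b = −n. -/
import Mathlib


theorem stmt_9 (n : ℕ) (hn : 1 ≤ n) (a b : ℤ)
    (g : Matrix.GeneralLinearGroup (Fin 3) ℤ)
    (h1 : (g : Matrix (Fin 3) (Fin 3) ℤ).mulVec ![1, 0, 0] = ![1, 0, 0])
    (h3 : (g : Matrix (Fin 3) (Fin 3) ℤ).mulVec ![0, 0, 1] = ![0, 0, 1])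
    (hv : (g : Matrix (Fin 3) (Fin 3) ℤ).mulVec ![-((n : ℤ) - 1), (n : ℤ), -1] = ![a, b, -1]) :
    a ≡ 1 [ZMOD (n : ℤ)] ∧ (b = (n : ℤ) ∨ b = -(n : ℤ)) := by
  set M : Matrix (Fin 3) (Fin 3) ℤ := (g : Matrix (Fin 3) (Fin 3) ℤ) with hM
  have e1 := fun i => congrFun h1 i
  have e3 := fun i => congrFun h3 i
  have ev := fun i => congrFun hv i
  simp only [Matrix.mulVec, dotProduct, Fin.sum_univ_three, Matrix.cons_val_zero,
    Matrix.cons_val_one, Matrix.head_cons, Matrix.cons_val_two, Matrix.tail_cons] at e1 e3 ev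
  have h10 : M 1 0 = 0 := by have := e1 1; simpa using this
  have h20 : M 2 0 = 0 := by have := e1 2; simpa using this
  have h00 : M 0 0 = 1 := by have := e1 0; simpa using this
  have h02 : M 0 2 = 0 := by have := e3 0; simpa using this
  have h12 : M 1 2 = 0 := by have := e3 1; simpa using this
  have h22 : M 2 2 = 1 := by have := e3 2; simpa using this
  have hdet : IsUnit M.det := by
    have : IsUnit M := ⟨g, rfl⟩
    exact (Matrix.isUnit_iff_isUnit_det M).mp this
  have hdet3 : M.det = M 1 1 := by
    rw [Matrix.det_fin_three]
    rw [h10, h20, h02, h12, h00, h22]; ring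
  have hb : b = (n : ℤ) * M 1 1 := by
    have := ev 1; simp [h10, h12] at this; linarith
  have ha : a = -((n:ℤ)-1) + (n:ℤ) * M 0 1 := by
    have := ev 0; simp [h00, h02] at this; linarith
  constructor
  · have hd : (n:ℤ) ∣ (a - 1) := ⟨M 0 1 - 1, by rw [ha]; ring⟩
    exact (Int.modEq_iff_dvd.mpr hd).symm
  · rcases Int.isUnit_iff.mp (hdet3 ▸ hdet) with h | h
    · left; rw [hb, h, mul_one]
    · right; rw [hb, h]; ring
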